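/- Under the assumptions of the previous statement, with P^{1,1} := E[(x−x̂ʳ)(x−x̂ʳ)ᵀ|𝒢], P_s := E[(x−x̂ˢ)(x−x̂ˢ)ᵀ|𝒢], the cross-covariance and sensor-estimate covariances satisfy: E[(x−x̂ʳ)(x̂ˢ−x̂ʳ)ᵀ|𝒢] = P^{1,1} − P_s and E[(x̂ˢ−x̂ʳ)(x̂ˢ−x̂ʳ)ᵀ|𝒢] = P^{1,1} − P_s. In particular, the augmented error covariance matrix [[P^{1,1}, P^{1,2}],[P^{1,2}, P^{2,2}]] has P^{1,2} = P^{2,2} = P^{1,1} − P_s. -/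

import Mathlib

open MeasureTheory

set_option linter.unusedSectionVars false

section Aux

variable {Ω : Type*} {m0 : MeasurableSpace Ω} {μ : Measure Ω} [IsProbabilityMeasure μ]

lemma aux_int_mul {f g : Ω → ℝ} (hf : MemLp f 2 μ) (hg : MemLp g 2 μ) :
    Integrable (fun ω => f ω * g ω) μ := by
  have h : MemLp (f • g) 1 μ :=
    hg.smul hf (p := 2) (q := 2) (r := 1) (hpqr := ⟨by rw [inv_one]; exact ENNReal.inv_two_add_inv_two⟩)
  rw [memLp_one_iff_integrable] at h
  exact h

lemma aux_memℒp_condexp {F : MeasurableSpace Ω} (hFm0 : F ≤ m0) {f : Ω → ℝ}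
    (hf : MemLp f 2 μ) : MemLp (μ[f|F]) 2 μ := by
  have hfi : Integrable f μ := hf.integrable one_le_two
  have hae : ((condExpL2 ℝ ℝ hFm0 (hf.toLp f) : Lp ℝ 2 μ) : Ω → ℝ) =ᵐ[μ] μ[f|F] := by
    refine ae_eq_condExp_of_forall_setIntegral_eq hFm0 hfi
      (fun s hs hμs => integrableOn_condExpL2_of_measure_ne_top hFm0 hμs.ne _)
      (fun s hs hμs => ?_) (aestronglyMeasurable_condExpL2 hFm0 _)
    rw [integral_condExpL2_eq hFm0 (hf.toLp f) hs hμs.ne]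
    exact integral_congr_ae (ae_restrict_of_ae hf.coeFn_toLp)
  exact (Lp.memLp _).ae_eq hae

/-- Orthogonality: if `μ[f|F] =ᵐ 0` and `g` is `F`-measurable, then `μ[f g|G] =ᵐ 0` for `G ≤ F`. -/
lemma aux_ortho {G F : MeasurableSpace Ω} (hGF : G ≤ F) (hFm0 : F ≤ m0)
    {f g : Ω → ℝ} (hf : MemLp f 2 μ) (hg : MemLp g 2 μ)
    (hgm : StronglyMeasurable[F] g) (hfF : μ[f|F] =ᵐ[μ] 0) :
    μ[fun ω => f ω * g ω|G] =ᵐ[μ] 0 := by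
  have hfg : Integrable (fun ω => f ω * g ω) μ := aux_int_mul hf hg
  have hgf : Integrable (g * f) μ := by
    have := aux_int_mul hg hf
    simpa [Pi.mul_def] using this
  have h1 : μ[fun ω => f ω * g ω|F] =ᵐ[μ] 0 := by
    have heq : (fun ω => f ω * g ω) = g * f := by funext ω; simp [mul_comm]
    rw [heq]
    calc μ[g * f|F] =ᵐ[μ] g * μ[f|F] :=
          condExp_mul_of_stronglyMeasurable_left hgm hgf (hf.integrable one_le_two)
      _ =ᵐ[μ] 0 := by filter_upwards [hfF] with ω hω; simp [hω]
  calc μ[fun ω => f ω * g ω|G]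
      =ᵐ[μ] μ[μ[fun ω => f ω * g ω|F]|G] := (condExp_condExp_of_le hGF hFm0).symm
    _ =ᵐ[μ] μ[(0 : Ω → ℝ)|G] := condExp_congr_ae h1
    _ = 0 := condExp_zero

end Aux

theorem augmented_covariance_structure {Ω : Type*} {m0 : MeasurableSpace Ω}
    (μ : Measure Ω) [IsProbabilityMeasure μ]
    (G F : MeasurableSpace Ω) (hGF : G ≤ F) (hFm0 : F ≤ m0)
    (d : ℕ) (x : Ω → Fin d → ℝ)
    (hx : ∀ i, MemLp (fun ω => x ω i) 2 μ)
    (xs xr : Fin d → Ω → ℝ)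
    (hxs : ∀ i, xs i = μ[fun ω => x ω i | F])
    (hxr : ∀ i, xr i = μ[fun ω => x ω i | G])
    (P11 Ps : Fin d → Fin d → Ω → ℝ)
    (hP11 : ∀ i j, P11 i j = μ[fun ω => (x ω i - xr i ω) * (x ω j - xr j ω) | G])
    (hPs : ∀ i j, Ps i j = μ[fun ω => (x ω i - xs i ω) * (x ω j - xs j ω) | G]) :
    (∀ i j,
      μ[fun ω => (x ω i - xr i ω) * (xs j ω - xr j ω) | G] =ᵐ[μ]
        fun ω => P11 i j ω - Ps i j ω) ∧
    (∀ i j,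
      μ[fun ω => (xs i ω - xr i ω) * (xs j ω - xr j ω) | G] =ᵐ[μ]
        fun ω => P11 i j ω - Ps i j ω) := by
  have hGm0 : G ≤ m0 := hGF.trans hFm0
  have hxs2 : ∀ i, MemLp (xs i) 2 μ := fun i => (hxs i) ▸ aux_memℒp_condexp hFm0 (hx i)
  have hxr2 : ∀ i, MemLp (xr i) 2 μ := fun i => (hxr i) ▸ aux_memℒp_condexp hGm0 (hx i)
  have ha2 : ∀ i, MemLp (fun ω => x ω i - xs i ω) 2 μ := fun i => (hx i).sub (hxs2 i)
  have hb2 : ∀ i, MemLp (fun ω => xs i ω - xr i ω) 2 μ := fun i => (hxs2 i).sub (hxr2 i)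
  have hbm : ∀ j, StronglyMeasurable[F] (fun ω => xs j ω - xr j ω) := by
    intro j
    simp only [hxs j, hxr j]
    exact stronglyMeasurable_condExp.sub (stronglyMeasurable_condExp.mono hGF)
  have hfF0 : ∀ i, μ[(fun ω => x ω i - xs i ω)|F] =ᵐ[μ] 0 := by
    intro i
    have h1 : Integrable (fun ω => x ω i) μ := (hx i).integrable one_le_two
    have h2 : Integrable (xs i) μ := (hxs2 i).integrable one_le_two
    have h3 : μ[xs i|F] = xs i :=
      condExp_of_stronglyMeasurable hFm0 (by rw [hxs i]; exact stronglyMeasurable_condExp) h2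
    have h4 : μ[(fun ω => x ω i) - xs i|F] =ᵐ[μ] μ[(fun ω => x ω i)|F] - μ[xs i|F] :=
      condExp_sub h1 h2 F
    refine h4.trans ?_
    rw [h3, hxs i]
    exact Filter.EventuallyEq.of_eq (sub_self _)
  have hzeroB : ∀ i j, μ[(fun ω => (x ω i - xs i ω) * (xs j ω - xr j ω))|G] =ᵐ[μ] 0 :=
    fun i j => aux_ortho hGF hFm0 (ha2 i) (hb2 j) (hbm j) (hfF0 i)
  have hzeroC : ∀ i j, μ[(fun ω => (xs i ω - xr i ω) * (x ω j - xs j ω))|G] =ᵐ[μ] 0 := by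
    intro i j
    have heq : (fun ω => (xs i ω - xr i ω) * (x ω j - xs j ω))
        = (fun ω => (x ω j - xs j ω) * (xs i ω - xr i ω)) := by funext ω; ring
    rw [heq]
    exact aux_ortho hGF hFm0 (ha2 j) (hb2 i) (hbm i) (hfF0 j)
  have iaa : ∀ i j, Integrable (fun ω => (x ω i - xs i ω) * (x ω j - xs j ω)) μ :=
    fun i j => aux_int_mul (ha2 i) (ha2 j)
  have iab : ∀ i j, Integrable (fun ω => (x ω i - xs i ω) * (xs j ω - xr j ω)) μ :=
    fun i j => aux_int_mul (ha2 i) (hb2 j)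
  have iba : ∀ i j, Integrable (fun ω => (xs i ω - xr i ω) * (x ω j - xs j ω)) μ :=
    fun i j => aux_int_mul (hb2 i) (ha2 j)
  have ibb : ∀ i j, Integrable (fun ω => (xs i ω - xr i ω) * (xs j ω - xr j ω)) μ :=
    fun i j => aux_int_mul (hb2 i) (hb2 j)
  have hkey : ∀ i j, μ[(fun ω => (xs i ω - xr i ω) * (xs j ω - xr j ω))|G] =ᵐ[μ]
      fun ω => P11 i j ω - Ps i j ω := by
    intro i j
    have hdecomp : (fun ω => (x ω i - xr i ω) * (x ω j - xr j ω)) =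
        (fun ω => (x ω i - xs i ω) * (x ω j - xs j ω)) +
          ((fun ω => (x ω i - xs i ω) * (xs j ω - xr j ω)) +
            ((fun ω => (xs i ω - xr i ω) * (x ω j - xs j ω)) +
              (fun ω => (xs i ω - xr i ω) * (xs j ω - xr j ω)))) := by
      funext ω; simp only [Pi.add_apply]; ring
    have e1 : μ[(fun ω => (x ω i - xr i ω) * (x ω j - xr j ω))|G] =ᵐ[μ]
        μ[(fun ω => (x ω i - xs i ω) * (x ω j - xs j ω))|G] +
          μ[((fun ω => (x ω i - xs i ω) * (xs j ω - xr j ω)) +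
            ((fun ω => (xs i ω - xr i ω) * (x ω j - xs j ω)) +
              (fun ω => (xs i ω - xr i ω) * (xs j ω - xr j ω))))|G] := by
      rw [hdecomp]
      exact condExp_add (iaa i j) ((iab i j).add ((iba i j).add (ibb i j))) G
    have e2 := condExp_add (μ := μ) (iab i j) ((iba i j).add (ibb i j)) G
    have e3 := condExp_add (μ := μ) (iba i j) (ibb i j) G
    rw [hP11 i j, hPs i j]
    filter_upwards [e1, e2, e3, hzeroB i j, hzeroC i j] with ω h1 h2 h3 hB hC
    simp only [Pi.add_apply] at h1 h2 h3
    rw [h1, h2, h3, hB, hC]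
    simp
  refine ⟨fun i j => ?_, hkey⟩
  have hdecomp : (fun ω => (x ω i - xr i ω) * (xs j ω - xr j ω)) =
      (fun ω => (x ω i - xs i ω) * (xs j ω - xr j ω)) +
        (fun ω => (xs i ω - xr i ω) * (xs j ω - xr j ω)) := by
    funext ω; simp only [Pi.add_apply]; ring
  have e1 : μ[(fun ω => (x ω i - xr i ω) * (xs j ω - xr j ω))|G] =ᵐ[μ]
      μ[(fun ω => (x ω i - xs i ω) * (xs j ω - xr j ω))|G] +
        μ[(fun ω => (xs i ω - xr i ω) * (xs j ω - xr j ω))|G] := by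
    rw [hdecomp]
    exact condExp_add (iab i j) (ibb i j) G
  filter_upwards [e1, hzeroB i j, hkey i j] with ω h1 hB hk
  simp only [Pi.add_apply] at h1
  rw [h1, hB, hk]
  simp
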